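/- For the conjugate-coordinate system of Appell's F₂ with a = −(1−γ₂+β₂)/(s−t), q = s(s−1)/(t(t−1)), and m as specified, the positive Weingarten invariant W⁺ = 2q²·∂_s a − q·∂_t m + m·∂_t q vanishes identically; likewise with b = −(β₂−1)/(s−t) and n as specified, W⁻ = 2∂_t b − ∂_s n vanishes identically. Hence both line congruences for F₂ are W-congruences for all parameter values. -/

import Mathlib

noncomputable def pdx (u : ℝ → ℝ → ℝ) : ℝ → ℝ → ℝ := fun x y => deriv (fun x' => u x' y) x
noncomputable def pdy (u : ℝ → ℝ → ℝ) : ℝ → ℝ → ℝ := fun x y => deriv (fun y' => u x y') y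

/-- For the conjugate-coordinate system of Appell's `F₂`, the Weingarten invariants
`W⁺ = 2q² a_s - q m_t + m q_t` and `W⁻ = 2 b_t - n_s` both vanish identically for all
parameter values, so both line congruences for `F₂` are W-congruences. -/
theorem F2_W_congruence (α β₁ β₂ γ₁ γ₂ : ℝ) :
    ∀ s t : ℝ, s ≠ 0 → s ≠ 1 → t ≠ 0 → t ≠ 1 → s ≠ t →
      (let a : ℝ → ℝ → ℝ := fun s' t' => -(1 - γ₂ + β₂) / (s' - t')
       let b : ℝ → ℝ → ℝ := fun s' t' => -(β₂ - 1) / (s' - t')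
       let q : ℝ → ℝ → ℝ := fun s' t' => s' * (s' - 1) / (t' * (t' - 1))
       let m : ℝ → ℝ → ℝ := fun s' t' =>
         ((2 * α - γ₁ - 2 * γ₂ + 4) * s' ^ 2 + (-2 * α + 2 * β₂ + γ₁ - 2) * s' * t'
           + (-α + β₁ - β₂ + 2 * γ₂ - 3) * s' + (α - β₁ - β₂ + 1) * t')
           / (t' * (t' - 1) * (s' - t'))
       let n : ℝ → ℝ → ℝ := fun s' t' =>
         ((2 * α + 2 * β₂ - γ₁ - 2 * γ₂ + 2) * s' * t' + (-α + β₁ - β₂ + γ₂ - 1) * s'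
           + (-2 * α + γ₁ + 2 * γ₂ - 4) * t' ^ 2 + (α - β₁ - β₂ - γ₂ + 3) * t')
           / (t' * (t' - 1) * (s' - t'))
       (2 * (q s t) ^ 2 * pdx a s t - q s t * pdy m s t + m s t * pdy q s t = 0) ∧
       (2 * pdy b s t - pdx n s t = 0)) := by
  intro s t hs0 hs1 ht0 ht1 hst
  have hst' : s - t ≠ 0 := sub_ne_zero.mpr hst
  have hts' : s - t ≠ 0 := hst'
  have ht1' : t - 1 ≠ 0 := sub_ne_zero.mpr ht1
  have hden : t * (t - 1) * (s - t) ≠ 0 := by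
    exact mul_ne_zero (mul_ne_zero ht0 ht1') hst'
  have hq : t * (t - 1) ≠ 0 := mul_ne_zero ht0 ht1'
  -- derivative of a in s
  have hA : HasDerivAt (fun s' : ℝ => -(1 - γ₂ + β₂) / (s' - t))
      ((0 * (s - t) - -(1 - γ₂ + β₂) * 1) / (s - t) ^ 2) s :=
    (hasDerivAt_const s (-(1 - γ₂ + β₂))).div ((hasDerivAt_id s).sub_const t) hst'
  -- derivative of b in t
  have hB : HasDerivAt (fun t' : ℝ => -(β₂ - 1) / (s - t'))
      ((0 * (s - t) - -(β₂ - 1) * (0 - 1)) / (s - t) ^ 2) t :=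
    (hasDerivAt_const t (-(β₂ - 1))).div ((hasDerivAt_const t s).sub (hasDerivAt_id t)) hst'
  -- derivative of q in t
  have hQ : HasDerivAt (fun t' : ℝ => s * (s - 1) / (t' * (t' - 1)))
      ((0 * (t * (t - 1)) - s * (s - 1) * (1 * (t - 1) + t * 1)) / (t * (t - 1)) ^ 2) t :=
    (hasDerivAt_const t (s * (s - 1))).div
      ((hasDerivAt_id t).mul ((hasDerivAt_id t).sub_const 1)) hq
  -- derivative of m in t
  have hMden : HasDerivAt (fun t' : ℝ => t' * (t' - 1) * (s - t'))
      ((1 * (t - 1) + t * 1) * (s - t) + t * (t - 1) * (0 - 1)) t :=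
    (((hasDerivAt_id t).mul ((hasDerivAt_id t).sub_const 1)).mul
      ((hasDerivAt_const t s).sub (hasDerivAt_id t)))
  have hMnum : HasDerivAt (fun t' : ℝ =>
      (2 * α - γ₁ - 2 * γ₂ + 4) * s ^ 2 + (-2 * α + 2 * β₂ + γ₁ - 2) * s * t'
        + (-α + β₁ - β₂ + 2 * γ₂ - 3) * s + (α - β₁ - β₂ + 1) * t')
      (0 + (-2 * α + 2 * β₂ + γ₁ - 2) * s * 1 + 0 + (α - β₁ - β₂ + 1) * 1) t :=
    (((hasDerivAt_const t ((2 * α - γ₁ - 2 * γ₂ + 4) * s ^ 2)).add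
      ((hasDerivAt_id t).const_mul ((-2 * α + 2 * β₂ + γ₁ - 2) * s))).add
      (hasDerivAt_const t ((-α + β₁ - β₂ + 2 * γ₂ - 3) * s))).add
      ((hasDerivAt_id t).const_mul (α - β₁ - β₂ + 1))
  have hM := hMnum.div hMden hden
  simp only [Pi.div_def] at hM
  -- derivative of n in s
  have hNden : HasDerivAt (fun s' : ℝ => t * (t - 1) * (s' - t)) (t * (t - 1) * 1) s :=
    ((hasDerivAt_id s).sub_const t).const_mul (t * (t - 1))
  have hNnum : HasDerivAt (fun s' : ℝ =>
      (2 * α + 2 * β₂ - γ₁ - 2 * γ₂ + 2) * s' * t + (-α + β₁ - β₂ + γ₂ - 1) * s'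
        + (-2 * α + γ₁ + 2 * γ₂ - 4) * t ^ 2 + (α - β₁ - β₂ - γ₂ + 3) * t)
      ((2 * α + 2 * β₂ - γ₁ - 2 * γ₂ + 2) * 1 * t + (-α + β₁ - β₂ + γ₂ - 1) * 1 + 0 + 0) s :=
    (((((hasDerivAt_id s).const_mul (2 * α + 2 * β₂ - γ₁ - 2 * γ₂ + 2)).mul_const t).add
      ((hasDerivAt_id s).const_mul (-α + β₁ - β₂ + γ₂ - 1))).add
      (hasDerivAt_const s ((-2 * α + γ₁ + 2 * γ₂ - 4) * t ^ 2))).add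
      (hasDerivAt_const s ((α - β₁ - β₂ - γ₂ + 3) * t))
  have hN := hNnum.div hNden hden
  simp only [Pi.div_def] at hN
  refine ⟨?_, ?_⟩
  · simp only [pdx, pdy]
    rw [hA.deriv, hM.deriv, hQ.deriv]
    field_simp
    ring
  · simp only [pdx, pdy]
    rw [hB.deriv, hN.deriv]
    field_simp
    ring
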